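/- The subgroup of SL(2,ℝ) generated by the two matrices T = (1, √3; 0, 1) and V = (2, −√3; √3, −1) equals G, the group of all matrices of the form (a, b√3; c√3, d) with a, b, c, d ∈ ℤ and ad − 3bc = 1. (In particular, an element of PSL(2,ℝ) belongs to the group G₃ generated by the Möbius transformations induced by T and V precisely when it is represented by a matrix of this form.) -/

import Mathlib

open Matrix

noncomputable def Msqrt3 (a b c d : ℤ) : Matrix (Fin 2) (Fin 2) ℝ :=
  !![(a:ℝ), (b:ℝ) * Real.sqrt 3; (c:ℝ) * Real.sqrt 3, (d:ℝ)]

lemma sqrt3_mul_self' : Real.sqrt 3 * Real.sqrt 3 = 3 :=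
  Real.mul_self_sqrt (by norm_num)

lemma Msqrt3_mul (a b c d a' b' c' d' : ℤ) :
    Msqrt3 a b c d * Msqrt3 a' b' c' d' =
      Msqrt3 (a*a'+3*b*c') (a*b'+b*d') (c*a'+d*c') (3*c*b'+d*d') := by
  have h3 := sqrt3_mul_self'
  ext i j
  fin_cases i <;> fin_cases j <;>
    simp [Msqrt3, Matrix.mul_apply, Fin.sum_univ_two] <;> push_cast
  · linear_combination (b*c' : ℝ) * h3
  · ring
  · ring
  · linear_combination (c*b' : ℝ) * h3

lemma Msqrt3_det (a b c d : ℤ) :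
    (Msqrt3 a b c d).det = ((a * d - 3 * b * c : ℤ) : ℝ) := by
  have h3 := sqrt3_mul_self'
  simp only [Msqrt3, Matrix.det_fin_two_of]
  push_cast
  linear_combination (-(b*c) : ℝ) * h3

lemma Msqrt3_adj (a b c d : ℤ) :
    adjugate (Msqrt3 a b c d) = Msqrt3 d (-b) (-c) a := by
  simp only [Msqrt3, Matrix.adjugate_fin_two_of]
  push_cast
  ring_nf

lemma form_det (A : Matrix.SpecialLinearGroup (Fin 2) ℝ) (a b c d : ℤ)
    (hA : (A : Matrix (Fin 2) (Fin 2) ℝ) = Msqrt3 a b c d) :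
    a * d - 3 * b * c = 1 := by
  have h := A.2
  rw [hA, Msqrt3_det] at h
  exact_mod_cast h

lemma reduce_step (a c : ℤ) (hc : c ≠ 0) (ha : ¬ (3:ℤ) ∣ a) :
    ∃ n : ℤ, (a + 3*n*c - c).natAbs < c.natAbs ∨
      (a + 3*n*c - 2*c).natAbs < c.natAbs := by
  set m : ℤ := 3 * c.natAbs with hm
  have hm0 : 0 < m := by
    have : 0 < c.natAbs := Int.natAbs_pos.mpr hc
    omega
  set r := a % m with hr
  have hr0 : 0 ≤ r := Int.emod_nonneg a (ne_of_gt hm0)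
  have hr1 : r < m := Int.emod_lt_of_pos a hm0
  set q := a / m with hq
  have hk : m * q + r = a := Int.mul_ediv_add_emod a m
  have h3r : ¬ (3:ℤ) ∣ r := by
    intro ⟨t, ht⟩
    exact ha ⟨(c.natAbs) * q + t, by linear_combination hk.symm + ht⟩
  rcases lt_or_gt_of_ne hc with hneg | hpos
  · have hcabs : (c.natAbs : ℤ) = -c := by omega
    refine ⟨q + 1, ?_⟩
    rw [hm, hcabs] at hk hr1
    have key : a + 3*(q+1)*c - c = r + 3*c - c := by linear_combination -hk
    have key2 : a + 3*(q+1)*c - 2*c = r + 3*c - 2*c := by linear_combination -hk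
    rw [key, key2]
    omega
  · have hcabs : (c.natAbs : ℤ) = c := by omega
    refine ⟨-q, ?_⟩
    rw [hm, hcabs] at hk hr1
    have key : a + 3*(-q)*c - c = r - c := by linear_combination -hk
    have key2 : a + 3*(-q)*c - 2*c = r - 2*c := by linear_combination -hk
    rw [key, key2]
    omega

section Main

variable (T V : Matrix.SpecialLinearGroup (Fin 2) ℝ)
    (hT : (T : Matrix (Fin 2) (Fin 2) ℝ) = !![1, Real.sqrt 3; 0, 1])
    (hV : (V : Matrix (Fin 2) (Fin 2) ℝ) = !![2, -Real.sqrt 3; Real.sqrt 3, -1])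

include hT in
lemma coe_T_form : (T : Matrix (Fin 2) (Fin 2) ℝ) = Msqrt3 1 1 0 1 := by
  rw [hT]; simp [Msqrt3]

include hV in
lemma coe_V_form : (V : Matrix (Fin 2) (Fin 2) ℝ) = Msqrt3 2 (-1) 1 (-1) := by
  rw [hV]; simp [Msqrt3]

include hT in
lemma coe_T_zpow (n : ℤ) : ((T ^ n : Matrix.SpecialLinearGroup (Fin 2) ℝ) :
    Matrix (Fin 2) (Fin 2) ℝ) = Msqrt3 1 n 0 1 := by
  have hT' := coe_T_form T hT
  induction n using Int.induction_on with
  | zero => simp [Msqrt3, Matrix.one_fin_two]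
  | succ n ih =>
      rw [_root_.zpow_add_one, Matrix.SpecialLinearGroup.coe_mul, ih, hT', Msqrt3_mul]
      congr 1 <;> ring
  | pred n ih =>
      rw [_root_.zpow_sub_one, Matrix.SpecialLinearGroup.coe_mul, ih,
        Matrix.SpecialLinearGroup.coe_inv, hT', Msqrt3_adj, Msqrt3_mul]
      congr 1 <;> ring

include hV in
lemma coe_V_sq : ((V ^ (2:ℕ) : Matrix.SpecialLinearGroup (Fin 2) ℝ) :
    Matrix (Fin 2) (Fin 2) ℝ) = Msqrt3 1 (-1) 1 (-2) := by
  have hV' := coe_V_form V hV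
  rw [pow_two, Matrix.SpecialLinearGroup.coe_mul, hV', Msqrt3_mul]
  congr 1

include hV in
lemma coe_V_cube : ((V ^ (3:ℕ) : Matrix.SpecialLinearGroup (Fin 2) ℝ) :
    Matrix (Fin 2) (Fin 2) ℝ) = Msqrt3 (-1) 0 0 (-1) := by
  have hV' := coe_V_form V hV
  have h2 := coe_V_sq V hV
  rw [pow_succ, Matrix.SpecialLinearGroup.coe_mul, h2, hV', Msqrt3_mul]
  congr 1

include hT hV in
lemma main_induction : ∀ (k : ℕ) (A : Matrix.SpecialLinearGroup (Fin 2) ℝ)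
    (a b c d : ℤ), (A : Matrix (Fin 2) (Fin 2) ℝ) = Msqrt3 a b c d →
    c.natAbs = k → A ∈ Subgroup.closure {T, V} := by
  have hTmem : T ∈ Subgroup.closure {T, V} :=
    Subgroup.subset_closure (by simp)
  have hVmem : V ∈ Subgroup.closure ({T, V} : Set _) :=
    Subgroup.subset_closure (by simp)
  intro k
  induction k using Nat.strong_induction_on with
  | _ k IH =>
    intro A a b c d hA hk
    have hdet : a * d - 3 * b * c = 1 := form_det A a b c d hA
    by_cases hc : c = 0
    · subst hc
      have had : a * d = 1 := by linarith
      rcases Int.mul_eq_one_iff_eq_one_or_neg_one.mp had with ⟨ha1, hd1⟩ | ⟨ha1, hd1⟩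
      · have : A = T ^ b := by
          apply Subtype.coe_injective
          show (A : Matrix (Fin 2) (Fin 2) ℝ) =
            ((T ^ b : Matrix.SpecialLinearGroup (Fin 2) ℝ) : Matrix (Fin 2) (Fin 2) ℝ)
          rw [coe_T_zpow T hT, hA, ha1, hd1]
        rw [this]
        exact zpow_mem hTmem b
      · have : A = V ^ (3:ℕ) * T ^ (-b) := by
          apply Subtype.coe_injective
          show (A : Matrix (Fin 2) (Fin 2) ℝ) =
            ((V ^ (3:ℕ) * T ^ (-b) : Matrix.SpecialLinearGroup (Fin 2) ℝ) : Matrix (Fin 2) (Fin 2) ℝ)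
          rw [Matrix.SpecialLinearGroup.coe_mul, coe_T_zpow T hT, coe_V_cube V hV,
            Msqrt3_mul, hA, ha1, hd1]
          congr 1 <;> ring
        rw [this]
        exact mul_mem (pow_mem hVmem 3) (zpow_mem hTmem (-b))
    · have h3a : ¬ (3:ℤ) ∣ a := by
        rintro ⟨t, ht⟩
        have : (3:ℤ) ∣ 1 := ⟨t * d - b * c, by linear_combination -hdet + d * ht⟩
        norm_num at this
      obtain ⟨n, hcase⟩ := reduce_step a c hc h3a
      have hTA : ((T ^ n * A : Matrix.SpecialLinearGroup (Fin 2) ℝ) :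
          Matrix (Fin 2) (Fin 2) ℝ) = Msqrt3 (a + 3*n*c) (b + n*d) c d := by
        rw [Matrix.SpecialLinearGroup.coe_mul, coe_T_zpow T hT, hA, Msqrt3_mul]
        congr 1 <;> ring
      rcases hcase with hlt | hlt
      · -- use V
        have hB : ((V * (T ^ n * A) : Matrix.SpecialLinearGroup (Fin 2) ℝ) :
            Matrix (Fin 2) (Fin 2) ℝ) =
            Msqrt3 (2*(a+3*n*c) - 3*c) (2*(b+n*d) - d) (a + 3*n*c - c) (3*(b+n*d) - d) := by
          rw [Matrix.SpecialLinearGroup.coe_mul, coe_V_form V hV, hTA, Msqrt3_mul]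
          congr 1 <;> ring
        have hBmem : V * (T ^ n * A) ∈ Subgroup.closure ({T, V} : Set _) :=
          IH _ (hk ▸ hlt) _ _ _ _ _ hB rfl
        have : A = (T ^ n)⁻¹ * (V⁻¹ * (V * (T ^ n * A))) := by group
        rw [this]
        exact mul_mem (inv_mem (zpow_mem hTmem n)) (mul_mem (inv_mem hVmem) hBmem)
      · -- use V ^ 2
        have hB : ((V ^ (2:ℕ) * (T ^ n * A) : Matrix.SpecialLinearGroup (Fin 2) ℝ) :
            Matrix (Fin 2) (Fin 2) ℝ) =
            Msqrt3 ((a+3*n*c) - 3*c) ((b+n*d) - d) (a + 3*n*c - 2*c) (3*(b+n*d) - 2*d) := by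
          rw [Matrix.SpecialLinearGroup.coe_mul, coe_V_sq V hV, hTA, Msqrt3_mul]
          congr 1 <;> ring
        have hBmem : V ^ (2:ℕ) * (T ^ n * A) ∈ Subgroup.closure ({T, V} : Set _) :=
          IH _ (hk ▸ hlt) _ _ _ _ _ hB rfl
        have : A = (T ^ n)⁻¹ * ((V ^ (2:ℕ))⁻¹ * (V ^ (2:ℕ) * (T ^ n * A))) := by group
        rw [this]
        exact mul_mem (inv_mem (zpow_mem hTmem n)) (mul_mem (inv_mem (pow_mem hVmem 2)) hBmem)

end Main

/-- The subgroup of `SL(2, ℝ)` generated by `T = (1, √3; 0, 1)` and `V = (2, −√3; √3, −1)`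
equals the group `G` of all matrices `(a, b√3; c√3, d)` with `a, b, c, d ∈ ℤ` and
`ad − 3bc = 1`. -/
theorem closure_T_V_eq_sqrt3_group
    (T V : Matrix.SpecialLinearGroup (Fin 2) ℝ)
    (hT : (T : Matrix (Fin 2) (Fin 2) ℝ) = !![1, Real.sqrt 3; 0, 1])
    (hV : (V : Matrix (Fin 2) (Fin 2) ℝ) = !![2, -Real.sqrt 3; Real.sqrt 3, -1]) :
    (Subgroup.closure {T, V} : Set (Matrix.SpecialLinearGroup (Fin 2) ℝ)) =
      {A : Matrix.SpecialLinearGroup (Fin 2) ℝ | ∃ a b c d : ℤ,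
        (A : Matrix (Fin 2) (Fin 2) ℝ) =
          !![(a:ℝ), (b:ℝ) * Real.sqrt 3; (c:ℝ) * Real.sqrt 3, (d:ℝ)] ∧
        a * d - 3 * b * c = 1} := by
  ext A
  simp only [SetLike.mem_coe, Set.mem_setOf_eq]
  constructor
  · intro hmem
    induction hmem using Subgroup.closure_induction with
    | mem x hx =>
        rcases hx with hx | hx
        · exact ⟨1, 1, 0, 1, by rw [hx, hT]; norm_num [Msqrt3], by norm_num⟩
        · exact ⟨2, -1, 1, -1, by
            rw [Set.mem_singleton_iff] at hx
            rw [hx, hV]; norm_num, by norm_num⟩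
    | one =>
        refine ⟨1, 0, 0, 1, ?_, by norm_num⟩
        rw [Matrix.SpecialLinearGroup.coe_one, Matrix.one_fin_two]
        norm_num
    | mul x y hx hy ihx ihy =>
        obtain ⟨a, b, c, d, hxe, _⟩ := ihx
        obtain ⟨a', b', c', d', hye, _⟩ := ihy
        have hcoe : ((x * y : Matrix.SpecialLinearGroup (Fin 2) ℝ) : Matrix (Fin 2) (Fin 2) ℝ) =
            Msqrt3 (a*a'+3*b*c') (a*b'+b*d') (c*a'+d*c') (3*c*b'+d*d') := by
          rw [Matrix.SpecialLinearGroup.coe_mul,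
            show (x : Matrix (Fin 2) (Fin 2) ℝ) = Msqrt3 a b c d from hxe,
            show (y : Matrix (Fin 2) (Fin 2) ℝ) = Msqrt3 a' b' c' d' from hye,
            Msqrt3_mul]
        exact ⟨_, _, _, _, hcoe, form_det (x * y) _ _ _ _ hcoe⟩
    | inv x hx ihx =>
        obtain ⟨a, b, c, d, hxe, _⟩ := ihx
        have hcoe : ((x⁻¹ : Matrix.SpecialLinearGroup (Fin 2) ℝ) : Matrix (Fin 2) (Fin 2) ℝ) =
            Msqrt3 d (-b) (-c) a := by
          rw [Matrix.SpecialLinearGroup.coe_inv,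
            show (x : Matrix (Fin 2) (Fin 2) ℝ) = Msqrt3 a b c d from hxe, Msqrt3_adj]
        exact ⟨_, _, _, _, hcoe, form_det x⁻¹ _ _ _ _ hcoe⟩
  · rintro ⟨a, b, c, d, hAe, _⟩
    exact main_induction T V hT hV c.natAbs A a b c d hAe rfl
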